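/- Let K be a field and b, c ∈ K such that the Kubert-Tate curve E(b,c) has nonzero discriminant. Then the point (0,0) on E(b,c) has order exactly 5 if and only if b = c. -/

import Mathlib

/-- The Kubert-Tate normal form curve E(b,c) : y^2 + (1-c)xy - by = x^3 - bx^2. -/
def Ebc {K : Type*} [CommRing K] (b c : K) : WeierstrassCurve.Affine K :=
  { a₁ := 1 - c, a₂ := -b, a₃ := -b, a₄ := 0, a₆ := 0 }
/-- The point (0, 0) on E(b,c), nonsingular since the discriminant is nonzero. -/
noncomputable def P₀ {K : Type*} [Field K] (b c : K) (hΔ : (Ebc b c).Δ ≠ 0) :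
    (Ebc b c).Point :=
  .some 0 0 (((Ebc b c).equation_iff_nonsingular_of_Δ_ne_zero hΔ).mp ((Ebc b c).equation_zero.mpr rfl))

open WeierstrassCurve.Affine

lemma some_eq_some' {F : Type*} [Field F] {W : WeierstrassCurve.Affine F}
    {x₁ y₁ x₂ y₂ : F} (h₁ : W.Nonsingular x₁ y₁) (hx : x₁ = x₂) (hy : y₁ = y₂)
    (h₂ : W.Nonsingular x₂ y₂) : Point.some _ _ h₁ = Point.some _ _ h₂ := by
  subst hx; subst hy; rfl

lemma b_ne_zero {K : Type*} [Field K] {b c : K} (hΔ : (Ebc b c).Δ ≠ 0) : b ≠ 0 := by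
  rintro rfl
  apply hΔ
  simp [Ebc, WeierstrassCurve.Δ, WeierstrassCurve.b₂, WeierstrassCurve.b₄,
    WeierstrassCurve.b₆, WeierstrassCurve.b₈]

open Classical in
theorem stmt_6 {K : Type*} [Field K] (b c : K) (hΔ : (Ebc b c).Δ ≠ 0) :
    addOrderOf (P₀ b c hΔ) = 5 ↔ b = c := by
  have hb : b ≠ 0 := b_ne_zero hΔ
  set W := Ebc b c with hW
  have h0 : W.Nonsingular 0 0 :=
    (W.equation_iff_nonsingular_of_Δ_ne_zero hΔ).mp (W.equation_zero.mpr rfl)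
  have h2 : W.Nonsingular b (b * c) := by
    apply (W.equation_iff_nonsingular_of_Δ_ne_zero hΔ).mp
    rw [equation_iff]; simp only [hW, Ebc]; ring
  have h3 : W.Nonsingular c (b - c) := by
    apply (W.equation_iff_nonsingular_of_Δ_ne_zero hΔ).mp
    rw [equation_iff]; simp only [hW, Ebc]; ring
  have hP : P₀ b c hΔ = Point.some _ _ h0 := rfl
  -- doubling
  have hy0 : (0 : K) ≠ W.negY 0 0 := by
    simp only [negY, hW, Ebc]
    intro h; apply hb; linear_combination -h
  have e2 : Point.some _ _ h0 + Point.some _ _ h0 = Point.some _ _ h2 := by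
    rw [Point.add_self_of_Y_ne hy0]
    apply some_eq_some'
    · rw [slope_of_Y_ne rfl hy0]
      simp only [addX, negY, hW, Ebc]
      field_simp
      ring
    · rw [slope_of_Y_ne rfl hy0]
      simp only [addY, negAddY, addX, negY, hW, Ebc]
      field_simp
      ring
  -- tripling
  have hx20 : b ≠ (0 : K) := hb
  have e3 : Point.some _ _ h2 + Point.some _ _ h0 = Point.some _ _ h3 := by
    rw [Point.add_of_X_ne hx20]
    apply some_eq_some'
    · rw [slope_of_X_ne hx20]
      simp only [addX, negY, hW, Ebc]
      field_simp
      ring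
    · rw [slope_of_X_ne hx20]
      simp only [addY, negAddY, addX, negY, hW, Ebc]
      field_simp
      ring
  -- 5P = 0 ↔ b = c
  have h5 : 5 • P₀ b c hΔ = 0 ↔ b = c := by
    have hsplit : 5 • P₀ b c hΔ =
        (P₀ b c hΔ + P₀ b c hΔ + P₀ b c hΔ) + (P₀ b c hΔ + P₀ b c hΔ) := by
      abel
    rw [hsplit, hP, e2, e3]
    constructor
    · intro h
      by_cases hx : c = b
      · exact hx.symm
      · rw [Point.add_of_X_ne hx] at h
        exact absurd h (Point.some_ne_zero _)
    · rintro rfl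
      apply Point.add_of_Y_eq rfl
      simp only [negY, hW, Ebc]
      ring
  constructor
  · intro h
    apply h5.mp
    rw [← h]
    exact addOrderOf_nsmul_eq_zero _
  · intro h
    have h5' : 5 • P₀ b c hΔ = 0 := h5.mpr h
    have hdvd : addOrderOf (P₀ b c hΔ) ∣ 5 := addOrderOf_dvd_of_nsmul_eq_zero h5'
    have hne : P₀ b c hΔ ≠ 0 := Point.some_ne_zero _
    rcases (Nat.prime_five).eq_one_or_self_of_dvd _ hdvd with h1 | h5''
    · exfalso
      exact hne (AddMonoid.addOrderOf_eq_one_iff.mp h1)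
    · exact h5''
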